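/- Let M be a real symmetric positive definite 3×3 matrix and, for a real symmetric 3×3 matrix N, let G_M(N) denote the unique real symmetric 3×3 matrix G satisfying G·M^{-1/2} + M^{-1/2}·G = -M⁻¹·N·M⁻¹. Then the linear map G_M is self-adjoint and negative definite with respect to the trace inner product: for all real symmetric 3×3 matrices N, N' one has tr(G_M(N)·N') = tr(N·G_M(N')), and tr(G_M(N)·N) < 0 whenever N ≠ 0. -/

import Mathlib

open Matrix

open scoped ComplexOrder in
/-- The square root of a positive semidefinite matrix, as defined in the older Mathlib
(`Matrix.PosSemidef.sqrt`, since removed in favour of `CFC.sqrt`). -/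
noncomputable def Matrix.PosSemidef.sqrt {n 𝕜 : Type*} [Fintype n] [DecidableEq n] [RCLike 𝕜]
    {A : Matrix n n 𝕜} (hA : A.PosSemidef) : Matrix n n 𝕜 :=
  hA.1.eigenvectorUnitary.1 * diagonal ((↑) ∘ (√·) ∘ hA.1.eigenvalues) *
    (star hA.1.eigenvectorUnitary : Matrix n n 𝕜)

private lemma psd_sqrt_mul_self {A : Matrix (Fin 3) (Fin 3) ℝ} (hA : A.PosSemidef) :
    hA.sqrt * hA.sqrt = A := by
  have hU : (star hA.1.eigenvectorUnitary : Matrix (Fin 3) (Fin 3) ℝ) *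
      hA.1.eigenvectorUnitary.1 = 1 := Unitary.coe_star_mul_self _
  have hD : diagonal ((↑) ∘ (√·) ∘ hA.1.eigenvalues) *
      diagonal ((↑) ∘ (√·) ∘ hA.1.eigenvalues) =
      diagonal (RCLike.ofReal ∘ hA.1.eigenvalues : Fin 3 → ℝ) := by
    rw [diagonal_mul_diagonal]
    congr 1
    funext i
    simp [Real.mul_self_sqrt (hA.eigenvalues_nonneg i)]
  conv_rhs => rw [hA.1.spectral_theorem, Unitary.conjStarAlgAut_apply]
  unfold Matrix.PosSemidef.sqrt
  calc _ = hA.1.eigenvectorUnitary.1 * (diagonal ((↑) ∘ (√·) ∘ hA.1.eigenvalues) *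
      ((star hA.1.eigenvectorUnitary : Matrix (Fin 3) (Fin 3) ℝ) *
      hA.1.eigenvectorUnitary.1) * diagonal ((↑) ∘ (√·) ∘ hA.1.eigenvalues)) *
      (star hA.1.eigenvectorUnitary : Matrix (Fin 3) (Fin 3) ℝ) := by noncomm_ring
    _ = _ := by rw [hU, mul_one, hD]

private lemma psd_posSemidef_sqrt {A : Matrix (Fin 3) (Fin 3) ℝ} (hA : A.PosSemidef) :
    hA.sqrt.PosSemidef := by
  unfold Matrix.PosSemidef.sqrt
  have hD : (diagonal ((↑) ∘ (√·) ∘ hA.1.eigenvalues : Fin 3 → ℝ)).PosSemidef :=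
    PosSemidef.diagonal (fun i => by simp [Real.sqrt_nonneg])
  have := hD.mul_mul_conjTranspose_same (hA.1.eigenvectorUnitary.1)
  rwa [← star_eq_conjTranspose, ← Unitary.coe_star] at this

private lemma tr_pos {B X : Matrix (Fin 3) (Fin 3) ℝ} (hB : B.PosDef) (hX : X ≠ 0) :
    0 < (X * B * Xᵀ).trace := by
  have hdiag : ∀ i, (X * B * Xᵀ) i i = star (X i) ⬝ᵥ B *ᵥ X i := by
    intro i
    simp only [Matrix.mul_apply, Matrix.transpose_apply, dotProduct, Matrix.mulVec,
      star_trivial, Pi.star_apply]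
    simp only [Finset.sum_mul, Finset.mul_sum]
    rw [Finset.sum_comm]
    exact Finset.sum_congr rfl fun p _ => Finset.sum_congr rfl fun q _ => by ring
  have hrow : ∃ i, X i ≠ 0 := by
    by_contra h
    push_neg at h
    exact hX (by ext i j; simpa using congrFun (h i) j)
  obtain ⟨i, hi⟩ := hrow
  rw [Matrix.trace]
  refine Finset.sum_pos' (fun j _ => ?_) ⟨i, Finset.mem_univ i, ?_⟩
  · rw [Matrix.diag_apply, hdiag]
    exact hB.posSemidef.dotProduct_mulVec_nonneg (X j)
  · rw [Matrix.diag_apply, hdiag]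
    exact hB.dotProduct_mulVec_pos hi

/-- Let `M` be real symmetric positive definite (3×3) and for
symmetric `N` let `G N` be the unique symmetric matrix with
`G N · M^{-1/2} + M^{-1/2} · G N = -M⁻¹·N·M⁻¹` (this defining property is taken
as the hypothesis `hG`).  Then `G` is self-adjoint and negative definite for the
trace inner product: `tr(G(N)·N') = tr(N·G(N'))` for all symmetric `N, N'`, and
`tr(G(N)·N) < 0` whenever `N ≠ 0`. -/
theorem stmt_2 (M : Matrix (Fin 3) (Fin 3) ℝ) (hM : M.PosDef)
    (G : Matrix (Fin 3) (Fin 3) ℝ → Matrix (Fin 3) (Fin 3) ℝ)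
    (hG : ∀ N : Matrix (Fin 3) (Fin 3) ℝ, N.IsHermitian →
      (G N).IsHermitian ∧
      G N * (hM.posSemidef.sqrt)⁻¹ + (hM.posSemidef.sqrt)⁻¹ * G N = -(M⁻¹ * N * M⁻¹)) :
    (∀ N N' : Matrix (Fin 3) (Fin 3) ℝ, N.IsHermitian → N'.IsHermitian →
        (G N * N').trace = (N * G N').trace) ∧
    (∀ N : Matrix (Fin 3) (Fin 3) ℝ, N.IsHermitian → N ≠ 0 →
        (G N * N).trace < 0) := by
  set S := hM.posSemidef.sqrt with hSdef
  have hSS : S * S = M := psd_sqrt_mul_self hM.posSemidef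
  have hSsd : S.PosSemidef := psd_posSemidef_sqrt hM.posSemidef
  -- S is positive definite
  have hS : S.PosDef := by
    refine Matrix.PosDef.of_dotProduct_mulVec_pos hSsd.1 fun x hx => ?_
    rcases lt_or_eq_of_le (hSsd.dotProduct_mulVec_nonneg x) with h | h
    · exact h
    · exfalso
      have hSx : S *ᵥ x = 0 := (hSsd.dotProduct_mulVec_zero_iff x).mp h.symm
      have hMx : M *ᵥ x = 0 := by
        rw [← hSS, ← Matrix.mulVec_mulVec, hSx, Matrix.mulVec_zero]
      have := hM.dotProduct_mulVec_pos hx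
      rw [hMx, dotProduct_zero] at this
      exact lt_irrefl 0 this
  have hMdet : IsUnit M.det := isUnit_iff_ne_zero.mpr hM.det_pos.ne'
  have hSdet : IsUnit S.det := isUnit_iff_ne_zero.mpr hS.det_pos.ne'
  have hSinvS : S⁻¹ * S = 1 := Matrix.nonsing_inv_mul S hSdet
  have hSSinv : S * S⁻¹ = 1 := Matrix.mul_nonsing_inv S hSdet
  have hMSinv : M * S⁻¹ = S := by rw [← hSS, mul_assoc, hSSinv, mul_one]
  have hSinvM : S⁻¹ * M = S := by rw [← hSS, ← mul_assoc, hSinvS, one_mul]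
  -- the key identity: N = -(M * G N * S + S * G N * M)
  have key : ∀ N : Matrix (Fin 3) (Fin 3) ℝ, N.IsHermitian →
      N = -(M * G N * S + S * G N * M) := by
    intro N hN
    have h := congrArg (fun X => M * X * M) (hG N hN).2
    have hMN : M * -(M⁻¹ * N * M⁻¹) * M = -N := by
      rw [Matrix.mul_neg, Matrix.neg_mul, ← mul_assoc, ← mul_assoc,
        Matrix.mul_nonsing_inv M hMdet, one_mul, mul_assoc,
        Matrix.nonsing_inv_mul M hMdet, mul_one]
    rw [hMN] at h
    have e : M * (G N * S⁻¹ + S⁻¹ * G N) * M = M * G N * S + S * G N * M := by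
      have e1 : M * (G N * S⁻¹ + S⁻¹ * G N) * M
          = M * G N * (S⁻¹ * M) + (M * S⁻¹) * (G N * M) := by noncomm_ring
      rw [e1, hSinvM, hMSinv, ← mul_assoc]
    rw [e] at h
    rw [← neg_eq_iff_eq_neg, h]
  -- G N = 0 implies N = 0
  have hGzero : ∀ N : Matrix (Fin 3) (Fin 3) ℝ, N.IsHermitian → G N = 0 → N = 0 := by
    intro N hN h0
    have := key N hN
    rw [h0] at this
    simpa using this
  constructor
  · intro N N' hN hN'
    have h1 := key N hN
    have h2 := key N' hN'
    set g1 := G N with hg1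
    set g2 := G N' with hg2
    rw [h1, h2, Matrix.mul_neg, Matrix.neg_mul,
      Matrix.mul_add, Matrix.add_mul, Matrix.trace_neg, Matrix.trace_neg,
      Matrix.trace_add, Matrix.trace_add]
    have c1 : (g1 * (M * g2 * S)).trace = (S * g1 * M * g2).trace := by
      rw [show g1 * (M * g2 * S) = (g1 * M * g2) * S by noncomm_ring,
        Matrix.trace_mul_comm,
        show S * (g1 * M * g2) = S * g1 * M * g2 by noncomm_ring]
    have c2 : (g1 * (S * g2 * M)).trace = (M * g1 * S * g2).trace := by
      rw [show g1 * (S * g2 * M) = (g1 * S * g2) * M by noncomm_ring,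
        Matrix.trace_mul_comm,
        show M * (g1 * S * g2) = M * g1 * S * g2 by noncomm_ring]
    rw [c1, c2]; ring
  · intro N hN hN0
    have hG0 : G N ≠ 0 := fun h => hN0 (hGzero N hN h)
    have h1 := key N hN
    have hGH := (hG N hN).1
    set g := G N with hg
    have hGt : gᵀ = g := by
      rwa [Matrix.IsHermitian, conjTranspose_eq_transpose_of_trivial] at hGH
    have hSt : Sᵀ = S := by
      have := hSsd.1
      rwa [Matrix.IsHermitian, conjTranspose_eq_transpose_of_trivial] at this
    -- tr(g * N) = -2 * tr(g * M * g * S)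
    have e1 : (g * N).trace = -(2 * (g * M * g * S).trace) := by
      rw [h1, Matrix.mul_neg, Matrix.mul_add, Matrix.trace_neg, Matrix.trace_add]
      have a1 : g * (M * g * S) = g * M * g * S := by noncomm_ring
      have a3 : (g * (S * g * M)).trace = (g * M * g * S).trace := by
        rw [show g * (S * g * M) = (g * S) * (g * M) by noncomm_ring,
          Matrix.trace_mul_comm,
          show (g * M) * (g * S) = g * M * g * S by noncomm_ring]
      rw [a1, a3]; ring
    rw [e1, neg_lt, neg_zero]
    -- rewrite as X * S * Xᵀ with X = S * g
    have hX : (S * g)ᵀ = g * S := by rw [Matrix.transpose_mul, hGt, hSt]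
    have e2 : (g * M * g * S).trace = ((S * g) * S * (S * g)ᵀ).trace := by
      rw [hX, ← hSS,
        show g * (S * S) * g * S = (g * S) * (S * (g * S)) by noncomm_ring,
        Matrix.trace_mul_comm,
        show (S * (g * S)) * (g * S) = S * g * S * (g * S) by noncomm_ring]
    have hXne : S * g ≠ 0 := by
      intro h
      apply hG0
      have := congrArg (fun X => S⁻¹ * X) h
      simpa [← mul_assoc, hSinvS, ← hg] using this
    have := tr_pos hS hXne
    linarith [e2 ▸ this]
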